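/- Let H be a bounded self-adjoint operator on ℓ²(ℤ). Suppose there exist constants C < ∞ and r > 0 and an orthonormal basis (φ_j)_{j∈ℤ} of ℓ²(ℤ) consisting of eigenvectors of H such that |φ_j(n)| ≤ C e^{−r|n − j|} for all n, j ∈ ℤ. Then H exhibits uniform dynamical localization: there exist constants C' < ∞ and r' > 0 such that sup_{t∈ℝ} |⟨δ_n, e^{−itH} δ_m⟩| ≤ C' e^{−r'|n−m|} for all n, m ∈ ℤ. -/

import Mathlib

open Real

lemma exp_apply_eig {E : Type*} [NormedAddCommGroup E] [NormedSpace ℂ E] [CompleteSpace E]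
    (A : E →L[ℂ] E) (v : E) (c : ℂ) (h : A v = c • v) :
    NormedSpace.exp A v = Complex.exp c • v := by
  have hpow : ∀ k : ℕ, (A ^ k) v = c ^ k • v := by
    intro k; induction k with
    | zero => simp
    | succ k ih => rw [pow_succ, ContinuousLinearMap.mul_apply, h, map_smul, ih, smul_smul, ← pow_succ']
  have h1 := (NormedSpace.exp_series_hasSum_exp' (𝕂 := ℂ) A).mapL
    (ContinuousLinearMap.apply ℂ E v)
  have h2 := (NormedSpace.exp_series_hasSum_exp' (𝕂 := ℂ) c).smul_const v
  rw [← Complex.exp_eq_exp_ℂ] at h2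
  exact h1.unique (h2.congr_fun fun k => by
    simp [ContinuousLinearMap.apply_apply, hpow, smul_smul, mul_comm]) |>.symm ▸ rfl

lemma summable_exp_int (a : ℝ) (ha : 0 < a) :
    Summable fun j : ℤ => Real.exp (-a * |(j : ℝ)|) := by
  have hnat : Summable fun n : ℕ => Real.exp (-a * n) := by
    simpa [mul_comm] using Real.summable_exp_nat_mul_iff.mpr (neg_lt_zero.mpr ha)
  refine Summable.of_nat_of_neg (hnat.congr fun k => ?_) (hnat.congr fun k => ?_)
  · congr 1
    push_cast
    rw [abs_of_nonneg (Nat.cast_nonneg k)]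
  · congr 1
    push_cast
    rw [abs_neg, abs_of_nonneg (Nat.cast_nonneg k)]

/-- ULE (with centers `m_j = j`) implies uniform dynamical localization:
if a bounded self-adjoint `H` on `ℓ²(ℤ)` has an orthonormal basis of eigenvectors `φ_j` with
`|φ_j(n)| ≤ C e^{−r|n−j|}`, then `sup_t |⟨δ_n, e^{−itH} δ_m⟩| ≤ C' e^{−r'|n−m|}`. -/
theorem stmt9 (H : lp (fun _ : ℤ => ℂ) 2 →L[ℂ] lp (fun _ : ℤ => ℂ) 2)
    (hsa : IsSelfAdjoint H)
    (φ : ℤ → lp (fun _ : ℤ => ℂ) 2)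
    (hON : Orthonormal ℂ φ)
    (hcomplete : (Submodule.span ℂ (Set.range φ)).topologicalClosure = ⊤)
    (heig : ∀ j : ℤ, ∃ μ : ℝ, H (φ j) = (μ : ℂ) • φ j)
    (C r : ℝ) (hC : 0 ≤ C) (hr : 0 < r)
    (hloc : ∀ j n : ℤ, ‖φ j n‖ ≤ C * exp (-r * |(n : ℝ) - (j : ℝ)|)) :
    ∃ C' r' : ℝ, 0 ≤ C' ∧ 0 < r' ∧ ∀ t : ℝ, ∀ n m : ℤ,
      ‖(inner ℂ (lp.single 2 n (1 : ℂ))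
          ((NormedSpace.exp ((-(t : ℂ) * Complex.I) • H)) (lp.single 2 m (1 : ℂ))) : ℂ)‖ ≤
        C' * exp (-r' * |(n : ℝ) - (m : ℝ)|) := by
  choose μ hμ using heig
  let b : HilbertBasis ℤ ℂ (lp (fun _ : ℤ => ℂ) 2) := HilbertBasis.mk hON hcomplete.ge
  have hb : ⇑b = φ := HilbertBasis.coe_mk hON hcomplete.ge
  have hb' := fun i => congrFun hb i
  have hS : Summable fun j : ℤ => Real.exp (-(r / 2) * |(j : ℝ)|) :=
    summable_exp_int _ (by linarith)
  set S : ℝ := ∑' j : ℤ, Real.exp (-(r / 2) * |(j : ℝ)|) with hSdef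
  have hS0 : 0 ≤ S := tsum_nonneg fun j => (Real.exp_pos _).le
  refine ⟨C ^ 2 * S, r / 2, by positivity, by linarith, fun t n m => ?_⟩
  set T := NormedSpace.exp ((-(t : ℂ) * Complex.I) • H) with hT
  -- action of T on eigenvectors
  have hTeig : ∀ j, T (φ j) = Complex.exp (-(t : ℂ) * Complex.I * (μ j)) • φ j := by
    intro j
    refine exp_apply_eig _ _ _ ?_
    rw [ContinuousLinearMap.smul_apply, hμ, smul_smul]
  -- expansion of δ_m in the basis
  have h1 : HasSum (fun j => b.repr (lp.single 2 m (1 : ℂ)) j • b j) (lp.single 2 m (1 : ℂ)) :=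
    b.hasSum_repr _
  have h2 := (h1.mapL T).mapL (innerSL ℂ (lp.single 2 n (1 : ℂ)))
  -- identify the terms
  have h3 : HasSum (fun j : ℤ =>
      (starRingEnd ℂ) (φ j m) * Complex.exp (-(t : ℂ) * Complex.I * (μ j)) * (φ j n))
      (inner ℂ (lp.single 2 n (1 : ℂ)) (T (lp.single 2 m (1 : ℂ))) : ℂ) := by
    refine h2.congr_fun fun j => ?_
    simp only [innerSL_apply_apply, b.repr_apply_apply, hb, map_smul, hTeig, inner_smul_right,
      lp.inner_single_left, lp.inner_single_right, RCLike.inner_apply, map_one, one_mul,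
      mul_one, smul_eq_mul, hb']
    ring_nf
  -- bound each term
  have hbound : ∀ j : ℤ,
      ‖(starRingEnd ℂ) (φ j m) * Complex.exp (-(t : ℂ) * Complex.I * (μ j)) * (φ j n)‖ ≤
      (C ^ 2 * exp (-(r / 2) * |(n : ℝ) - (m : ℝ)|)) * exp (-(r / 2) * |(j : ℝ) - (m : ℝ)|) := by
    intro j
    have habs : ‖Complex.exp (-(t : ℂ) * Complex.I * (μ j))‖ = 1 := by
      rw [Complex.norm_exp]
      norm_num
    rw [norm_mul, norm_mul, RingHomIsometric.norm_map, habs, mul_one]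
    have e1 := hloc j m
    have e2 := hloc j n
    have key : -r * |(m : ℝ) - (j : ℝ)| + -r * |(n : ℝ) - (j : ℝ)| ≤
        -(r / 2) * |(n : ℝ) - (m : ℝ)| + -(r / 2) * |(j : ℝ) - (m : ℝ)| := by
      have t1 : |(n : ℝ) - (m : ℝ)| ≤ |(n : ℝ) - (j : ℝ)| + |(m : ℝ) - (j : ℝ)| := by
        calc |(n : ℝ) - (m : ℝ)| ≤ |(n : ℝ) - (j : ℝ)| + |(j : ℝ) - (m : ℝ)| := abs_sub_le _ _ _
          _ = _ := by rw [abs_sub_comm ((j : ℝ)) ((m : ℝ))]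
      have t2 : |(j : ℝ) - (m : ℝ)| ≤ |(n : ℝ) - (j : ℝ)| + |(m : ℝ) - (j : ℝ)| := by
        rw [abs_sub_comm]; nlinarith [abs_nonneg ((n : ℝ) - (j : ℝ))]
      nlinarith
    calc ‖φ j m‖ * ‖φ j n‖ ≤ (C * exp (-r * |(m : ℝ) - (j : ℝ)|)) *
          (C * exp (-r * |(n : ℝ) - (j : ℝ)|)) := by
          exact mul_le_mul e1 e2 (norm_nonneg _) (by positivity)
      _ = C ^ 2 * exp (-r * |(m : ℝ) - (j : ℝ)| + -r * |(n : ℝ) - (j : ℝ)|) := by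
          rw [Real.exp_add]; ring
      _ ≤ C ^ 2 * exp (-(r / 2) * |(n : ℝ) - (m : ℝ)| + -(r / 2) * |(j : ℝ) - (m : ℝ)|) := by
          gcongr
          try exact key
      _ = _ := by rw [Real.exp_add]; ring
  -- the dominating series sums to C^2 * exp(...) * S
  have hgS : HasSum (fun j : ℤ => (C ^ 2 * exp (-(r / 2) * |(n : ℝ) - (m : ℝ)|)) *
      exp (-(r / 2) * |(j : ℝ) - (m : ℝ)|))
      ((C ^ 2 * exp (-(r / 2) * |(n : ℝ) - (m : ℝ)|)) * S) := by
    refine HasSum.mul_left _ ?_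
    have := (Equiv.subRight m).hasSum_iff.mpr hS.hasSum
    refine this.congr_fun fun j => ?_
    simp only [Function.comp, Equiv.subRight_apply]
    push_cast
    ring_nf
  have := h3.norm_le_of_bounded hgS hbound
  calc ‖(inner ℂ (lp.single 2 n (1 : ℂ)) (T (lp.single 2 m (1 : ℂ))) : ℂ)‖ ≤ _ := this
    _ = C ^ 2 * S * exp (-(r / 2) * |(n : ℝ) - (m : ℝ)|) := by ring
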